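/- The intersection of any family of tropically convex subsets of 𝕋±^d is tropically convex, and the image of a tropically convex subset of 𝕋±^d under a coordinate projection (deleting one coordinate) is a tropically convex subset of 𝕋±^{d−1}. -/
import Mathlib


/-!  Signed tropical numbers 𝕋±, the symmetrized tropical semiring 𝕊,
     and signed tropical convexity (Loho–Végh). -/

inductive SSign : Type where
  | pos : SSign
  | neg : SSign
  | bal : SSign
deriving DecidableEq

/-- The symmetrized tropical semiring 𝕊: the tropical zero 𝟘 = -∞ together with
elements `elem s r` where `s` is a sign (⊕, ⊖ or •) and `r` a real number. -/
inductive STrop : Type where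
  | zero : STrop
  | elem : SSign → ℝ → STrop

namespace STrop

/-- membership in the signed tropical numbers 𝕋± (i.e. not balanced-nonzero). -/
def isSigned : STrop → Prop
  | elem SSign.bal _ => False
  | _ => True

/-- membership in 𝕋≥, the nonnegative tropical numbers. -/
def nneg : STrop → Prop
  | zero => True
  | elem SSign.pos _ => True
  | _ => False

/-- membership in 𝕋≤, the nonpositive tropical numbers. -/
def npos : STrop → Prop
  | zero => True
  | elem SSign.neg _ => True
  | _ => False

/-- strictly positive signed element (sign ⊕, not 𝟘). -/
def isPos : STrop → Prop
  | elem SSign.pos _ => True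
  | _ => False

/-- balanced or 𝟘 (membership in 𝕋•). -/
def balZero : STrop → Prop
  | zero => True
  | elem SSign.bal _ => True
  | _ => False

/-- the negation map ⊖. -/
def neg : STrop → STrop
  | zero => zero
  | elem SSign.pos r => elem SSign.neg r
  | elem SSign.neg r => elem SSign.pos r
  | elem SSign.bal r => elem SSign.bal r

/-- tropical addition ⊕ on 𝕊. -/
noncomputable def add : STrop → STrop → STrop
  | zero, y => y
  | x, zero => x
  | elem s r, elem t u =>
    if r < u then elem t u
    else if u < r then elem s r
    else if s = t then elem s r
    else elem SSign.bal r

def signMul : SSign → SSign → SSign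
  | SSign.pos, t => t
  | SSign.neg, SSign.pos => SSign.neg
  | SSign.neg, SSign.neg => SSign.pos
  | SSign.neg, SSign.bal => SSign.bal
  | SSign.bal, _ => SSign.bal

/-- tropical multiplication ⊙ on 𝕊. -/
def mul : STrop → STrop → STrop
  | zero, _ => zero
  | _, zero => zero
  | elem s r, elem t u => elem (signMul s t) (r + u)

/-- a ⊖ b := a ⊕ (⊖b). -/
noncomputable def sub (x y : STrop) : STrop := add x (neg y)

/-- the tropical one, the signed element ⊕0. -/
def one : STrop := elem SSign.pos 0

/-- the absolute value |·| : 𝕊 → 𝕋≥. -/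
def absS : STrop → STrop
  | zero => zero
  | elem _ r => elem SSign.pos r

/-- strict order: x > y iff x ⊖ y is a strictly positive signed element. -/
def sgt (x y : STrop) : Prop := isPos (sub x y)

/-- balance relation: x ⋈ y iff x ⊖ y is balanced or 𝟘. -/
def bal (x y : STrop) : Prop := balZero (sub x y)

/-- the relation ⊵ : x ⊵ y iff x > y or x ⋈ y. -/
def teq (x y : STrop) : Prop := sgt x y ∨ bal x y

/-- the total order ≤ on the signed tropical numbers 𝕋±
(arbitrarily `False` whenever a balanced element is involved). -/
def sle : STrop → STrop → Prop
  | zero, zero => True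
  | zero, elem SSign.pos _ => True
  | elem SSign.neg _, zero => True
  | elem SSign.neg _, elem SSign.pos _ => True
  | elem SSign.pos r, elem SSign.pos u => r ≤ u
  | elem SSign.neg r, elem SSign.neg u => u ≤ r
  | _, _ => False

/-- U(a): the set of signed numbers incomparable with a; the singleton {a}
for signed a, and the order interval [⊖|a|, |a|] for balanced a. -/
def U : STrop → Set STrop
  | elem SSign.bal r => {x | isSigned x ∧ sle (elem SSign.neg r) x ∧ sle x (elem SSign.pos r)}
  | a => {a}

/-- tropical sum of finitely many elements of 𝕊. -/
noncomputable def sumFin : ∀ {n : ℕ}, (Fin n → STrop) → STrop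
  | 0, _ => zero
  | _ + 1, f => add (f 0) (sumFin fun i => f i.succ)

/-- matrix–vector product A ⊙ x over 𝕊. -/
noncomputable def mv {d n : ℕ} (A : Fin d → Fin n → STrop) (x : Fin n → STrop) : Fin d → STrop :=
  fun i => sumFin fun j => mul (A i j) (x j)

/-- vectors in 𝕋±^d. -/
def isSignedVec {d : ℕ} (v : Fin d → STrop) : Prop := ∀ i, isSigned (v i)

/-- the signed tropical convex hull of the columns of a matrix A:
tconv(A) = {z ∈ 𝕋±^d : z ⋈ A⊙x for some x ∈ 𝕋≥^n with ⊕_j x_j = 0}. -/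
def tconv {d n : ℕ} (A : Fin d → Fin n → STrop) : Set (Fin d → STrop) :=
  {z | isSignedVec z ∧ ∃ x : Fin n → STrop,
    (∀ j, nneg (x j)) ∧ sumFin x = one ∧ ∀ i, bal (z i) (mv A x i)}

/-- the signed tropical convex hull of an arbitrary set: the union of the hulls
of all finite collections of points of M. -/
def tconvSet {d : ℕ} (M : Set (Fin d → STrop)) : Set (Fin d → STrop) :=
  ⋃ (n : ℕ) (A : Fin d → Fin n → STrop) (_ : ∀ j, (fun i => A i j) ∈ M), tconv A

/-- a set M ⊆ 𝕋±^d is tropically convex iff M = tconv(M). -/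
def TropConvex {d : ℕ} (M : Set (Fin d → STrop)) : Prop := M = tconvSet M

/-- evaluation a ⊙ (0, x₁, …, x_d)ᵀ of an affine functional. -/
noncomputable def affEval {d : ℕ} (a : Fin (d + 1) → STrop) (x : Fin d → STrop) : STrop :=
  sumFin fun j => mul (a j) ((Fin.cons one x : Fin (d + 1) → STrop) j)

/-- the open signed tropical halfspace H⁺(a) = {x ∈ 𝕋±^d : a⊙(0,x)ᵀ > 𝟘}. -/
def Hopen {d : ℕ} (a : Fin (d + 1) → STrop) : Set (Fin d → STrop) :=
  {x | isSignedVec x ∧ sgt (affEval a x) zero}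

/-- the closed signed tropical halfspace H̄⁺(a) = {x ∈ 𝕋±^d : a⊙(0,x)ᵀ ⊵ 𝟘}. -/
def Hclosed {d : ℕ} (a : Fin (d + 1) → STrop) : Set (Fin d → STrop) :=
  {x | isSignedVec x ∧ teq (affEval a x) zero}

/-- the non-negative kernel nnker(A). -/
def nnker {d n : ℕ} (A : Fin d → Fin n → STrop) : Set (Fin n → STrop) :=
  {x | (∀ j, nneg (x j)) ∧ x ≠ (fun _ => zero) ∧ ∀ i, balZero (mv A x i)}

/-- the open tropical cone sep(A) = {y ∈ 𝕋±^d : yᵀ⊙A > 𝟘 componentwise}. -/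
def sep {d : ℕ} {J : Type} (A : Fin d → J → STrop) : Set (Fin d → STrop) :=
  {y | isSignedVec y ∧ ∀ j, isPos (sumFin fun i => mul (y i) (A i j))}

end STrop


namespace STrop

lemma add_zero' : ∀ x : STrop, add x zero = x
  | zero => rfl
  | elem _ _ => rfl

lemma mul_one' : ∀ x : STrop, mul x one = x
  | zero => rfl
  | elem s r => by cases s <;> simp [mul, one, signMul]

def wit : STrop → STrop
  | zero => zero
  | elem SSign.pos r => elem SSign.pos r
  | elem SSign.neg r => elem SSign.neg r
  | elem SSign.bal r => elem SSign.pos r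

lemma wit_signed : ∀ x, isSigned (wit x)
  | zero => trivial
  | elem SSign.pos _ => trivial
  | elem SSign.neg _ => trivial
  | elem SSign.bal _ => trivial

lemma wit_bal : ∀ x, bal (wit x) x
  | zero => trivial
  | elem SSign.pos r => by simp [bal, sub, neg, add, balZero, wit]
  | elem SSign.neg r => by simp [bal, sub, neg, add, balZero, wit]
  | elem SSign.bal r => by simp [bal, sub, neg, add, balZero, wit]

lemma bal_self : ∀ x : STrop, isSigned x → bal x x
  | zero, _ => trivial
  | elem SSign.pos r, _ => by simp [bal, sub, neg, add, balZero]
  | elem SSign.neg r, _ => by simp [bal, sub, neg, add, balZero]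
  | elem SSign.bal r, h => h.elim

lemma sumFin_one (f : Fin 1 → STrop) : sumFin f = f 0 := add_zero' (f 0)

lemma mem_tconvSet {d : ℕ} {M : Set (Fin d → STrop)} {z : Fin d → STrop} :
    z ∈ tconvSet M ↔ ∃ n, ∃ A : Fin d → Fin n → STrop,
      (∀ j, (fun i => A i j) ∈ M) ∧ z ∈ tconv A := by
  constructor
  · intro h
    obtain ⟨n, h⟩ := Set.mem_iUnion.mp h
    obtain ⟨A, h⟩ := Set.mem_iUnion.mp h
    obtain ⟨hA, h⟩ := Set.mem_iUnion.mp h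
    exact ⟨n, A, hA, h⟩
  · rintro ⟨n, A, hA, h⟩
    exact Set.mem_iUnion.mpr ⟨n, Set.mem_iUnion.mpr ⟨A, Set.mem_iUnion.mpr ⟨hA, h⟩⟩⟩

lemma self_mem_tconvSet {d : ℕ} {M : Set (Fin d → STrop)} {v : Fin d → STrop}
    (hs : isSignedVec v) (hv : v ∈ M) : v ∈ tconvSet M := by
  refine mem_tconvSet.mpr ⟨1, fun i _ => v i, fun j => hv, hs, fun _ => one,
    fun j => trivial, sumFin_one _, fun i => ?_⟩
  have : mv (fun i (_ : Fin 1) => v i) (fun _ => one) i = v i := by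
    show sumFin (fun j : Fin 1 => mul (v i) one) = v i
    rw [sumFin_one, mul_one']
  rw [this]
  exact bal_self _ (hs i)

lemma signed_of_convex {d : ℕ} {M : Set (Fin d → STrop)} (hM : TropConvex M)
    {v : Fin d → STrop} (hv : v ∈ M) : isSignedVec v := by
  rw [hM] at hv
  obtain ⟨n, A, hA, hv⟩ := mem_tconvSet.mp hv
  exact hv.1

end STrop

/-- intersections (within the ambient space 𝕋±^d) of tropically convex
sets are tropically convex, and coordinate projections of tropically convex sets
are tropically convex. -/
theorem intersection_and_projection_convex :
    (∀ (d : ℕ) (ι : Type) (F : ι → Set (Fin d → STrop)),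
      (∀ i, STrop.TropConvex (F i)) →
      STrop.TropConvex {v | STrop.isSignedVec v ∧ ∀ i, v ∈ F i}) ∧
    (∀ (d : ℕ) (k : Fin (d + 1)) (M : Set (Fin (d + 1) → STrop)),
      STrop.TropConvex M →
      STrop.TropConvex ((fun x (j : Fin d) => x (k.succAbove j)) '' M)) := by
  constructor
  · intro d ι F hF
    apply Set.Subset.antisymm
    · intro v hv
      exact STrop.self_mem_tconvSet hv.1 hv
    · intro z hz
      obtain ⟨n, A, hA, hzA⟩ := STrop.mem_tconvSet.mp hz
      refine ⟨hzA.1, fun i => ?_⟩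
      have : z ∈ STrop.tconvSet (F i) :=
        STrop.mem_tconvSet.mpr ⟨n, A, fun j => (hA j).2 i, hzA⟩
      rwa [← hF i] at this
  · intro d k M hM
    apply Set.Subset.antisymm
    · rintro v ⟨w, hw, rfl⟩
      have hws := STrop.signed_of_convex hM hw
      exact STrop.self_mem_tconvSet (fun j => hws _) ⟨w, hw, rfl⟩
    · intro z hz
      obtain ⟨n, B, hB, hzs, x, hx, hsum, hbal⟩ := STrop.mem_tconvSet.mp hz
      choose a ha hproj using hB
      set A : Fin (d + 1) → Fin n → STrop := fun i j => a j i with hAdef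
      have hrow : ∀ i j, A (k.succAbove i) j = B i j := fun i j => congrFun (hproj j) i
      have hmv : ∀ i, STrop.mv A x (k.succAbove i) = STrop.mv B x i := by
        intro i
        unfold STrop.mv
        congr 1
        funext j
        rw [hrow]
      set w : Fin (d + 1) → STrop := k.insertNth (STrop.wit (STrop.mv A x k)) z with hwdef
      have hwsig : STrop.isSignedVec w := by
        intro i
        rcases eq_or_ne i k with h | h
        · subst h; rw [hwdef, Fin.insertNth_apply_same]; exact STrop.wit_signed _
        · obtain ⟨j, rfl⟩ := Fin.exists_succAbove_eq h
          rw [hwdef, Fin.insertNth_apply_succAbove]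
          exact hzs j
      have hwM : w ∈ M := by
        rw [hM]
        refine STrop.mem_tconvSet.mpr ⟨n, A, fun j => ha j, hwsig, x, hx, hsum, fun i => ?_⟩
        rcases eq_or_ne i k with h | h
        · subst h; rw [hwdef, Fin.insertNth_apply_same]; exact STrop.wit_bal _
        · obtain ⟨j, rfl⟩ := Fin.exists_succAbove_eq h
          rw [hwdef, Fin.insertNth_apply_succAbove, hmv]
          exact hbal j
      refine ⟨w, hwM, ?_⟩
      funext j
      exact Fin.insertNth_apply_succAbove _ _ _ _
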